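/- Let f be a sense-preserving harmonic mapping on the unit disk D with α ≥ 0, and suppose the two-sided bound exp(-2αρ(z₀,z)) ≤ ((1-|z|²)J_f(z)^{1/2})/((1-|z₀|²)J_f(z₀)^{1/2}) ≤ exp(2αρ(z₀,z)) holds for all z₀, z ∈ D. Then |A_f(z)| ≤ α for every z ∈ D. -/

import Mathlib

open Complex Metric Set

noncomputable section

/-- The open unit disk in ℂ. -/
def 𝔻 : Set ℂ := Metric.ball (0 : ℂ) 1

/-- Dilatation ω = g'/h' of a harmonic mapping f = h + conj g. -/
def dil (h g : ℂ → ℂ) (z : ℂ) : ℂ := deriv g z / deriv h z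

/-- Harmonic pre-Schwarzian P_f = h''/h' - conj(ω)·ω'/(1-|ω|²). -/
def Pf (h g : ℂ → ℂ) (z : ℂ) : ℂ :=
  deriv (deriv h) z / deriv h z -
    (starRingEnd ℂ) (dil h g z) * deriv (dil h g) z /
      (((1 - ‖(dil h g z)‖ ^ 2 : ℝ) : ℂ))

/-- The operator A_f(z) = ((1-|z|²)/2)·P_f(z) - conj z. -/
def Af (h g : ℂ → ℂ) (z : ℂ) : ℂ :=
  (((1 - ‖z‖ ^ 2 : ℝ) : ℂ)) / 2 * Pf h g z - (starRingEnd ℂ) z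

/-- The operator A_φ for an analytic φ. -/
def Aan (φ : ℂ → ℂ) (z : ℂ) : ℂ :=
  (((1 - ‖z‖ ^ 2 : ℝ) : ℂ)) / 2 * (deriv (deriv φ) z / deriv φ z) -
    (starRingEnd ℂ) z

/-- Jacobian J_f = |h'|² - |g'|². -/
def Jf (h g : ℂ → ℂ) (z : ℂ) : ℝ :=
  ‖(deriv h z)‖ ^ 2 - ‖(deriv g z)‖ ^ 2

/-- f = h + conj g is a sense-preserving harmonic mapping on 𝔻. -/
def SensePreserving (h g : ℂ → ℂ) : Prop :=
  (∀ z ∈ 𝔻, AnalyticAt ℂ h z) ∧ (∀ z ∈ 𝔻, AnalyticAt ℂ g z) ∧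
  (∀ z ∈ 𝔻, deriv h z ≠ 0) ∧ (∀ z ∈ 𝔻, ‖(dil h g z)‖ < 1)

/-- Hyperbolic (Poincaré) distance on 𝔻, with density 1/(1-|z|²). -/
def hypDist (z w : ℂ) : ℝ :=
  (1 / 2) * Real.log
    ((1 + ‖((z - w) / (1 - (starRingEnd ℂ) w * z))‖) /
     (1 - ‖((z - w) / (1 - (starRingEnd ℂ) w * z))‖))

/-- Wirtinger derivative ∂_z of a real-valued function. -/
def wirtinger (u : ℂ → ℝ) (z : ℂ) : ℂ :=
  ((fderiv ℝ u z 1 : ℝ) : ℂ) / 2 - Complex.I * ((fderiv ℝ u z Complex.I : ℝ) : ℂ) / 2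

open Complex in
noncomputable def rlin (c : ℂ) : ℂ →L[ℝ] ℝ :=
  (2 : ℝ) • (Complex.reCLM.comp (((ContinuousLinearMap.mul ℂ ℂ) c).restrictScalars ℝ))

lemma rlin_apply (c v : ℂ) : rlin c v = 2 * (c * v).re := by simp [rlin]

lemma hasFDerivAt_normSq_comp {φ : ℂ → ℂ} {c : ℂ} {z : ℂ} (hφ : HasDerivAt φ c z) :
    HasFDerivAt (fun w => Complex.normSq (φ w)) (rlin ((starRingEnd ℂ) (φ z) * c)) z := by
  have h1 : HasFDerivAt φ ((ContinuousLinearMap.smulRight (1 : ℂ →L[ℂ] ℂ) c).restrictScalars ℝ) z :=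
    hφ.hasFDerivAt.restrictScalars ℝ
  have h2 : HasFDerivAt (fun w => (starRingEnd ℂ) (φ w))
      ((Complex.conjCLE.toContinuousLinearMap).comp
        ((ContinuousLinearMap.smulRight (1 : ℂ →L[ℂ] ℂ) c).restrictScalars ℝ)) z :=
    (Complex.conjCLE.toContinuousLinearMap.hasFDerivAt).comp z h1
  have h3 := (h1.mul' h2)
  have h4 := (Complex.reCLM.hasFDerivAt).comp z h3
  have heq : ∀ w, Complex.normSq (φ w) = Complex.reCLM (φ w * (starRingEnd ℂ) (φ w)) := by
    intro w; simp [Complex.mul_conj]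
  refine (h4.congr_fderiv ?_).congr_of_eventuallyEq
    (by filter_upwards with w; exact heq w)
  apply ContinuousLinearMap.ext
  intro v
  simp [rlin, Complex.mul_re, Complex.mul_im]
  ring

lemma analyticAt_deriv {f : ℂ → ℂ} {x : ℂ} (hf : AnalyticAt ℂ f x) :
    AnalyticAt ℂ (deriv f) x := by
  have h1 := ((ContinuousLinearMap.apply ℂ ℂ (1:ℂ)).analyticAt (fderiv ℂ f x)).comp hf.fderiv
  refine h1.congr ?_
  filter_upwards with w
  simp [Function.comp, fderiv_apply_one_eq_deriv]

/-- derivative of z ↦ log(1-|z|²) + (1/2) log(J z) -/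
lemma key_deriv {h g : ℂ → ℂ} {z₀ : ℂ}
    (hh : AnalyticAt ℂ h z₀) (hg : AnalyticAt ℂ g z₀)
    (hq : (1 - Complex.normSq z₀ : ℝ) ≠ 0)
    (hJ : (Complex.normSq (deriv h z₀) - Complex.normSq (deriv g z₀) : ℝ) ≠ 0) :
    HasFDerivAt (fun z => Real.log (1 - Complex.normSq z) +
        (1/2) * Real.log (Complex.normSq (deriv h z) - Complex.normSq (deriv g z)))
      (rlin (((1 - Complex.normSq z₀ : ℝ))⁻¹ • (-(starRingEnd ℂ) z₀) +
        ((2 * (Complex.normSq (deriv h z₀) - Complex.normSq (deriv g z₀)) : ℝ))⁻¹ •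
          ((starRingEnd ℂ) (deriv h z₀) * deriv (deriv h) z₀ -
           (starRingEnd ℂ) (deriv g z₀) * deriv (deriv g) z₀))) z₀ := by
  have hq1 : HasFDerivAt (fun z : ℂ => 1 - Complex.normSq z) (rlin (-(starRingEnd ℂ) z₀)) z₀ := by
    have := hasFDerivAt_normSq_comp (hasDerivAt_id z₀)
    have h2 := (this.const_sub (1:ℝ))
    refine h2.congr_fderiv ?_
    apply ContinuousLinearMap.ext; intro v
    simp [rlin_apply, Complex.mul_re, Complex.mul_im]; ring
  have hJ1 : HasFDerivAt (fun z => Complex.normSq (deriv h z) - Complex.normSq (deriv g z))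
      (rlin ((starRingEnd ℂ) (deriv h z₀) * deriv (deriv h) z₀ -
        (starRingEnd ℂ) (deriv g z₀) * deriv (deriv g) z₀)) z₀ := by
    have dh := hasFDerivAt_normSq_comp ((analyticAt_deriv hh).differentiableAt.hasDerivAt)
    have dg := hasFDerivAt_normSq_comp ((analyticAt_deriv hg).differentiableAt.hasDerivAt)
    refine (dh.sub dg).congr_fderiv ?_
    apply ContinuousLinearMap.ext; intro v
    simp [rlin_apply, sub_mul, Complex.sub_re]; ring
  have l1 := (Real.hasDerivAt_log hq).comp_hasFDerivAt z₀ hq1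
  have l2 := (Real.hasDerivAt_log hJ).comp_hasFDerivAt z₀ hJ1
  have l3 := l1.add (l2.const_mul (1/2 : ℝ))
  refine l3.congr_fderiv ?_
  apply ContinuousLinearMap.ext; intro v
  simp only [ContinuousLinearMap.add_apply, ContinuousLinearMap.smul_apply, rlin_apply,
    add_mul, smul_mul_assoc, Complex.add_re, Complex.smul_re, smul_eq_mul]
  field_simp


lemma quot_identity (a A b B h2 g2 : ℂ) (ha : a ≠ 0) (hA : A ≠ 0)
    (hJ : a * A - b * B ≠ 0) (hd : 1 - (b / a) * (B / A) ≠ 0) :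
    h2 / a - (B / A) * ((g2 * a - b * h2) / a ^ 2) / (1 - (b / a) * (B / A))
      = (A * h2 - B * g2) / (a * A - b * B) := by
  have hden : -(A * a ^ 3 * b * B) + A ^ 2 * a ^ 4 ≠ 0 := by
    have he : -(A * a ^ 3 * b * B) + A ^ 2 * a ^ 4 = A * a ^ 3 * (a * A - b * B) := by ring
    rw [he]; exact mul_ne_zero (mul_ne_zero hA (pow_ne_zero _ ha)) hJ
  rw [eq_div_iff hJ]
  field_simp
  have hJ' : a * A - B * b ≠ 0 := by rw [mul_comm B b]; exact hJ
  linear_combination (B * b * h2 - a * B * g2) * mul_inv_cancel₀ hJ'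

open Complex in
lemma af_eq {h g : ℂ → ℂ} {z₀ : ℂ}
    (hh : AnalyticAt ℂ h z₀) (hg : AnalyticAt ℂ g z₀)
    (hh1 : deriv h z₀ ≠ 0) (hω : ‖dil h g z₀‖ < 1)
    (hq : (1 - Complex.normSq z₀ : ℝ) ≠ 0) :
    Af h g z₀ = ((1 - ‖z₀‖ ^ 2 : ℝ) : ℂ) *
      ((((1 - Complex.normSq z₀ : ℝ))⁻¹ • (-(starRingEnd ℂ) z₀) +
        ((2 * (Complex.normSq (deriv h z₀) - Complex.normSq (deriv g z₀)) : ℝ))⁻¹ •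
          ((starRingEnd ℂ) (deriv h z₀) * deriv (deriv h) z₀ -
           (starRingEnd ℂ) (deriv g z₀) * deriv (deriv g) z₀))) := by
  set h1 := deriv h z₀
  set g1 := deriv g z₀
  set h2 := deriv (deriv h) z₀
  set g2 := deriv (deriv g) z₀
  have hw : dil h g z₀ = g1 / h1 := rfl
  have hder : deriv (dil h g) z₀ = (g2 * h1 - g1 * h2) / h1 ^ 2 := by
    unfold dil
    rw [show (fun z => deriv g z / deriv h z) = deriv g / deriv h from rfl, deriv_div ((analyticAt_deriv hg).differentiableAt)
      ((analyticAt_deriv hh).differentiableAt) hh1]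
  have hJpos : 0 < Complex.normSq h1 - Complex.normSq g1 := by
    have hlt : Complex.normSq g1 < Complex.normSq h1 := by
      have hd := hω
      rw [hw, norm_div] at hd
      have hpos : 0 < ‖h1‖ := by simpa [norm_pos_iff] using hh1
      have habs : ‖g1‖ < ‖h1‖ := by
        calc ‖g1‖ = (‖g1‖ / ‖h1‖) * ‖h1‖ := by
              field_simp
          _ < 1 * ‖h1‖ := mul_lt_mul_of_pos_right hd hpos
          _ = ‖h1‖ := one_mul _
      simpa [Complex.normSq_eq_norm_sq] using pow_lt_pow_left₀ habs (norm_nonneg _) (by norm_num)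
    linarith
  have hJ : (Complex.normSq h1 - Complex.normSq g1 : ℝ) ≠ 0 := ne_of_gt hJpos
  have e2 : ∀ w : ℂ, ((Complex.normSq w : ℝ) : ℂ) = w * (starRingEnd ℂ) w := by
    intro w; rw [Complex.mul_conj]
  have homega : (1 - ‖dil h g z₀‖ ^ 2 : ℝ) ≠ 0 := by
    have hlt : ‖dil h g z₀‖ ^ 2 < 1 := by
      have := pow_lt_pow_left₀ hω (norm_nonneg _) (two_ne_zero)
      simpa using this
    linarith
  have e1 : ((1 - ‖g1 / h1‖ ^ 2 : ℝ) : ℂ)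
      = 1 - (g1 / h1) * ((starRingEnd ℂ) g1 / (starRingEnd ℂ) h1) := by
    rw [← map_div₀, Complex.mul_conj]
    push_cast [Complex.sq_norm]
    ring
  have e3 : ((1 - ‖z₀‖ ^ 2 : ℝ) : ℂ) = ((1 - Complex.normSq z₀ : ℝ) : ℂ) := by
    rw [Complex.sq_norm]
  have hconj : (starRingEnd ℂ) h1 ≠ 0 := by simpa using hh1
  have hωne : 1 - (g1 / h1) * ((starRingEnd ℂ) g1 / (starRingEnd ℂ) h1) ≠ 0 := by
    rw [← e1]; exact_mod_cast Complex.ofReal_ne_zero.mpr homega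
  have hJc : h1 * (starRingEnd ℂ) h1 - g1 * (starRingEnd ℂ) g1 ≠ 0 := by
    rw [← e2, ← e2]
    have hcast : ((Complex.normSq h1 - Complex.normSq g1 : ℝ) : ℂ) ≠ 0 :=
      Complex.ofReal_ne_zero.mpr hJ
    push_cast at hcast
    convert hcast using 2
  unfold Af Pf
  rw [hder, hw, map_div₀, e1, e3]
  rw [quot_identity h1 ((starRingEnd ℂ) h1) g1 ((starRingEnd ℂ) g1) h2 g2 hh1 hconj hJc hωne]
  have e4 : ((2 * (Complex.normSq h1 - Complex.normSq g1) : ℝ) : ℂ)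
      = 2 * (h1 * (starRingEnd ℂ) h1 - g1 * (starRingEnd ℂ) g1) := by
    push_cast [← e2]; ring
  simp only [Complex.real_smul, Complex.ofReal_inv]
  rw [e4]
  have hqc : ((1 - Complex.normSq z₀ : ℝ) : ℂ) ≠ 0 := Complex.ofReal_ne_zero.mpr hq
  push_cast at hqc
  field_simp [hqc]
  ring

lemma hypdist_le {d : ℝ} (h0 : 0 ≤ d) (h1 : d < 1) :
    (1/2 : ℝ) * Real.log ((1 + d) / (1 - d)) ≤ (1/2) * (d + d * (1 - d)⁻¹) := by
  have hpos1 : (0:ℝ) < 1 + d := by linarith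
  have hpos2 : (0:ℝ) < 1 - d := by linarith
  have l1 : Real.log (1 + d) ≤ d := by
    have := Real.log_le_sub_one_of_pos hpos1
    linarith
  have l2 : Real.log (1 - d)⁻¹ ≤ d * (1 - d)⁻¹ := by
    have := Real.log_le_sub_one_of_pos (inv_pos.mpr hpos2)
    have he : (1 - d)⁻¹ - 1 = d * (1 - d)⁻¹ := by field_simp; ring
    linarith [he ▸ this]
  have : Real.log ((1 + d) / (1 - d)) = Real.log (1 + d) + Real.log (1 - d)⁻¹ := by
    rw [div_eq_mul_inv, Real.log_mul (ne_of_gt hpos1) (by positivity)]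
  rw [this]
  linarith

lemma hypdist_nonneg {d : ℝ} (h0 : 0 ≤ d) (h1 : d < 1) :
    0 ≤ (1/2 : ℝ) * Real.log ((1 + d) / (1 - d)) := by
  have : (1:ℝ) ≤ (1 + d) / (1 - d) := by
    rw [le_div_iff₀ (by linarith)]
    linarith
  have := Real.log_nonneg this
  linarith

open Complex in
lemma Jf_pos {h g : ℂ → ℂ} {z : ℂ} (hh1 : deriv h z ≠ 0)
    (hω : ‖dil h g z‖ < 1) :
    0 < Complex.normSq (deriv h z) - Complex.normSq (deriv g z) := by
  have hpos : 0 < ‖deriv h z‖ := by simpa [norm_pos_iff] using hh1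
  have hd := hω
  rw [show dil h g z = deriv g z / deriv h z from rfl, norm_div] at hd
  have habs : ‖deriv g z‖ < ‖deriv h z‖ := by
    calc ‖deriv g z‖
        = (‖deriv g z‖ / ‖deriv h z‖) * ‖deriv h z‖ := by
          field_simp
      _ < 1 * ‖deriv h z‖ := mul_lt_mul_of_pos_right hd hpos
      _ = ‖deriv h z‖ := one_mul _
  have := pow_lt_pow_left₀ habs (norm_nonneg _) (two_ne_zero)
  simp only [Complex.normSq_eq_norm_sq]
  linarith


open Filter Topology

/-- if exp(-2αρ(z₀,z)) ≤ ((1-|z|²)J_f(z)^{1/2})/((1-|z₀|²)J_f(z₀)^{1/2})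
≤ exp(2αρ(z₀,z)) for all z₀, z ∈ 𝔻, then |A_f(z)| ≤ α on 𝔻. -/
theorem stmt_16 (h g : ℂ → ℂ) (hf : SensePreserving h g) (α : ℝ) (hα : 0 ≤ α)
    (hbound : ∀ z₀ ∈ 𝔻, ∀ z ∈ 𝔻,
      Real.exp (-(2 * α * hypDist z₀ z)) ≤
          ((1 - ‖z‖ ^ 2) * Real.sqrt (Jf h g z)) /
            ((1 - ‖z₀‖ ^ 2) * Real.sqrt (Jf h g z₀)) ∧
      ((1 - ‖z‖ ^ 2) * Real.sqrt (Jf h g z)) /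
          ((1 - ‖z₀‖ ^ 2) * Real.sqrt (Jf h g z₀)) ≤
        Real.exp (2 * α * hypDist z₀ z)) :
    ∀ z ∈ 𝔻, ‖Af h g z‖ ≤ α := by

  obtain ⟨hhA, hgA, hh', hω⟩ := hf
  intro z₀ hz₀
  have habs1 : ∀ z ∈ 𝔻, ‖z‖ < 1 := by
    intro z hz; simpa [𝔻, Complex.dist_eq] using hz
  have hqpos : ∀ z ∈ 𝔻, (0:ℝ) < 1 - Complex.normSq z := by
    intro z hz
    have h1 : Complex.normSq z < 1 := by
      rw [← Complex.sq_norm]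
      exact pow_lt_one₀ (norm_nonneg _) (habs1 z hz) two_ne_zero
    linarith
  have hJpos : ∀ z ∈ 𝔻, (0:ℝ) <
      Complex.normSq (deriv h z) - Complex.normSq (deriv g z) := by
    intro z hz; exact Jf_pos (hh' z hz) (hω z hz)
  have hJfeq : ∀ z : ℂ, Jf h g z =
      Complex.normSq (deriv h z) - Complex.normSq (deriv g z) := by
    intro z; simp [Jf, Complex.sq_norm]
  set u : ℂ → ℝ := fun z => Real.log (1 - Complex.normSq z) +
      (1/2) * Real.log (Complex.normSq (deriv h z) - Complex.normSq (deriv g z)) with hu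
  have hFpos : ∀ z ∈ 𝔻, (0:ℝ) < (1 - ‖z‖ ^ 2) * Real.sqrt (Jf h g z) := by
    intro z hz
    have h1 : (0:ℝ) < 1 - ‖z‖ ^ 2 := by
      rw [Complex.sq_norm]; exact hqpos z hz
    have h2 : (0:ℝ) < Real.sqrt (Jf h g z) := by
      rw [hJfeq]; exact Real.sqrt_pos.mpr (hJpos z hz)
    positivity
  have hUF : ∀ z ∈ 𝔻,
      Real.log ((1 - ‖z‖ ^ 2) * Real.sqrt (Jf h g z)) = u z := by
    intro z hz
    have h1 : (0:ℝ) < 1 - ‖z‖ ^ 2 := by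
      rw [Complex.sq_norm]; exact hqpos z hz
    have h2 : (0:ℝ) < Real.sqrt (Jf h g z) := by
      rw [hJfeq]; exact Real.sqrt_pos.mpr (hJpos z hz)
    rw [Real.log_mul h1.ne' h2.ne', Real.log_sqrt (by rw [hJfeq]; exact (hJpos z hz).le)]
    rw [hu]
    simp only [Complex.sq_norm, hJfeq]
    ring
  have hudiff : ∀ z ∈ 𝔻, |u z - u z₀| ≤ 2 * α * hypDist z₀ z := by
    intro z hz
    obtain ⟨hb1, hb2⟩ := hbound z₀ hz₀ z hz
    have hRpos : (0:ℝ) < ((1 - ‖z‖ ^ 2) * Real.sqrt (Jf h g z)) /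
        ((1 - ‖z₀‖ ^ 2) * Real.sqrt (Jf h g z₀)) :=
      div_pos (hFpos z hz) (hFpos z₀ hz₀)
    have hlogR : Real.log (((1 - ‖z‖ ^ 2) * Real.sqrt (Jf h g z)) /
        ((1 - ‖z₀‖ ^ 2) * Real.sqrt (Jf h g z₀))) = u z - u z₀ := by
      rw [Real.log_div (hFpos z hz).ne' (hFpos z₀ hz₀).ne', hUF z hz, hUF z₀ hz₀]
    have hup : u z - u z₀ ≤ 2 * α * hypDist z₀ z := by
      rw [← hlogR]
      calc Real.log _ ≤ Real.log (Real.exp (2 * α * hypDist z₀ z)) :=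
            Real.log_le_log hRpos hb2
        _ = 2 * α * hypDist z₀ z := Real.log_exp _
    have hlo : -(2 * α * hypDist z₀ z) ≤ u z - u z₀ := by
      rw [← hlogR]
      calc -(2 * α * hypDist z₀ z) = Real.log (Real.exp (-(2 * α * hypDist z₀ z))) :=
            (Real.log_exp _).symm
        _ ≤ Real.log _ := Real.log_le_log (Real.exp_pos _) hb1
    rw [abs_sub_le_iff]
    constructor <;> linarith
  set w : ℂ := ((1 - Complex.normSq z₀ : ℝ))⁻¹ • (-(starRingEnd ℂ) z₀) +
      ((2 * (Complex.normSq (deriv h z₀) - Complex.normSq (deriv g z₀)) : ℝ))⁻¹ •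
        ((starRingEnd ℂ) (deriv h z₀) * deriv (deriv h) z₀ -
         (starRingEnd ℂ) (deriv g z₀) * deriv (deriv g) z₀) with hwdef
  have hKey : HasFDerivAt u (rlin w) z₀ :=
    key_deriv (hhA z₀ hz₀) (hgA z₀ hz₀) (hqpos z₀ hz₀).ne' (hJpos z₀ hz₀).ne'
  have hAf : Af h g z₀ = ((1 - ‖z₀‖ ^ 2 : ℝ) : ℂ) * w :=
    af_eq (hhA z₀ hz₀) (hgA z₀ hz₀) (hh' z₀ hz₀) (hω z₀ hz₀) (hqpos z₀ hz₀).ne'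
  have habsAf : ‖Af h g z₀‖ = (1 - Complex.normSq z₀) * ‖w‖ := by
    rw [hAf, norm_mul, Complex.norm_real, Real.norm_eq_abs, Complex.sq_norm, abs_of_pos (hqpos z₀ hz₀)]
  by_cases hw0 : w = 0
  · rw [habsAf, hw0]; simpa using hα
  have hwabs : (0:ℝ) < ‖w‖ := norm_pos_iff.mpr hw0
  set v : ℂ := (starRingEnd ℂ) w / ((‖w‖ : ℝ) : ℂ) with hvdef
  have hvabs : ‖v‖ = 1 := by
    rw [hvdef, norm_div, Complex.norm_conj, Complex.norm_real, Real.norm_eq_abs, abs_of_pos hwabs,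
      div_self hwabs.ne']
  have hLv : rlin w v = 2 * ‖w‖ := by
    rw [rlin_apply, hvdef, mul_div_assoc', Complex.mul_conj]
    rw [show ((Complex.normSq w : ℝ) : ℂ) / ((‖w‖ : ℝ) : ℂ)
        = (((Complex.normSq w / ‖w‖ : ℝ)) : ℂ) by push_cast; ring]
    rw [Complex.ofReal_re, Complex.normSq_eq_norm_sq]
    field_simp
  set γ : ℝ → ℂ := fun t => z₀ + t • v with hγ
  have hγ0 : γ 0 = z₀ := by simp [hγ]
  have hγcont : Continuous γ := by
    exact continuous_const.add (continuous_id.smul continuous_const)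
  have hγd : HasDerivAt γ v 0 := by
    have h1 : HasDerivAt (fun t : ℝ => t • v) ((1:ℝ) • v) 0 := (hasDerivAt_id (0:ℝ)).smul_const v
    simpa [hγ] using h1.const_add z₀
  have hcomp : HasDerivAt (fun t => u (γ t)) (rlin w v) 0 := by
    have hk2 : HasFDerivAt u (rlin w) (γ 0) := by rw [hγ0]; exact hKey
    exact hk2.comp_hasDerivAt 0 hγd
  have hslope : Tendsto (fun t : ℝ => (u (γ t) - u z₀) / t) (𝓝[>] (0:ℝ)) (𝓝 (rlin w v)) := by
    have h1 := hasDerivAt_iff_tendsto_slope.mp hcomp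
    have h2 : 𝓝[>] (0:ℝ) ≤ 𝓝[≠] (0:ℝ) := nhdsWithin_mono _ (fun t ht => ne_of_gt ht)
    refine (h1.mono_left h2).congr' ?_
    filter_upwards [self_mem_nhdsWithin] with t ht
    rw [slope_def_field]
    rw [hγ0]
    field_simp
    rw [sub_zero]
  set D : ℝ → ℝ := fun t => ‖(z₀ - γ t) / (1 - (starRingEnd ℂ) (γ t) * z₀)‖
    with hDdef
  have hDnonneg : ∀ t, 0 ≤ D t := fun t => norm_nonneg _
  have hhyp : ∀ t, hypDist z₀ (γ t) = (1/2) * Real.log ((1 + D t) / (1 - D t)) :=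
    fun t => rfl
  have hden0 : ‖1 - (starRingEnd ℂ) (γ 0) * z₀‖ = 1 - Complex.normSq z₀ := by
    rw [hγ0]
    rw [show (1 : ℂ) - (starRingEnd ℂ) z₀ * z₀ = ((1 - Complex.normSq z₀ : ℝ) : ℂ) by
      rw [mul_comm, Complex.mul_conj]; push_cast; ring]
    rw [Complex.norm_real, Real.norm_eq_abs, abs_of_pos (hqpos z₀ hz₀)]
  have hdenC : Continuous (fun t : ℝ => ‖1 - (starRingEnd ℂ) (γ t) * z₀‖) := by
    apply continuous_norm.comp
    exact continuous_const.sub ((Complex.continuous_conj.comp hγcont).mul continuous_const)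
  have hGtend : Tendsto (fun t : ℝ => (‖1 - (starRingEnd ℂ) (γ t) * z₀‖)⁻¹)
      (𝓝 (0:ℝ)) (𝓝 ((1 - Complex.normSq z₀)⁻¹)) := by
    have h1 := hdenC.tendsto 0
    rw [hden0] at h1
    exact h1.inv₀ (hqpos z₀ hz₀).ne'
  have hDt : ∀ t : ℝ, 0 < t →
      D t = t * (‖1 - (starRingEnd ℂ) (γ t) * z₀‖)⁻¹ := by
    intro t ht
    rw [hDdef]
    simp only
    rw [norm_div, div_eq_mul_inv]
    congr 1
    have h2 : z₀ - γ t = -(t • v) := by rw [hγ]; simp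
    rw [h2, norm_neg]
    rw [Complex.real_smul, norm_mul, Complex.norm_real, Real.norm_eq_abs, abs_of_pos ht, hvabs, mul_one]
  have hDtend : Tendsto D (𝓝[>] (0:ℝ)) (𝓝 0) := by
    have h1 : Tendsto (fun t : ℝ => t * (‖1 - (starRingEnd ℂ) (γ t) * z₀‖)⁻¹)
        (𝓝[>] (0:ℝ)) (𝓝 (0 * (1 - Complex.normSq z₀)⁻¹)) :=
      ((continuous_id.tendsto 0).mono_left nhdsWithin_le_nhds).mul
        (hGtend.mono_left nhdsWithin_le_nhds)
    rw [zero_mul] at h1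
    refine h1.congr' ?_
    filter_upwards [self_mem_nhdsWithin] with t ht
    exact (hDt t ht).symm
  set B : ℝ → ℝ := fun t =>
      α * (‖1 - (starRingEnd ℂ) (γ t) * z₀‖)⁻¹ * (1 + (1 - D t)⁻¹) with hBdef
  have hBtend : Tendsto B (𝓝[>] (0:ℝ)) (𝓝 (α * (1 - Complex.normSq z₀)⁻¹ * 2)) := by
    have l1 : Tendsto (fun t : ℝ => α * (‖1 - (starRingEnd ℂ) (γ t) * z₀‖)⁻¹)
        (𝓝[>] (0:ℝ)) (𝓝 (α * (1 - Complex.normSq z₀)⁻¹)) :=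
      (tendsto_const_nhds (x := α)).mul (hGtend.mono_left nhdsWithin_le_nhds)
    have l2 : Tendsto (fun t : ℝ => 1 + (1 - D t)⁻¹) (𝓝[>] (0:ℝ)) (𝓝 2) := by
      have l3 : Tendsto (fun t : ℝ => 1 - D t) (𝓝[>] (0:ℝ)) (𝓝 1) := by
        simpa using (tendsto_const_nhds (x := (1:ℝ))).sub hDtend
      have l4 := l3.inv₀ one_ne_zero
      have l5 := (tendsto_const_nhds (x := (1:ℝ))).add l4
      norm_num at l5 ⊢
      exact l5
    exact l1.mul l2
  have hev : ∀ᶠ t in 𝓝[>] (0:ℝ), |(u (γ t) - u z₀) / t| ≤ B t := by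
    have hmem : ∀ᶠ t in 𝓝[>] (0:ℝ), γ t ∈ 𝔻 := by
      have hopen : γ ⁻¹' 𝔻 ∈ 𝓝 (0:ℝ) := hγcont.continuousAt.preimage_mem_nhds
        (Metric.isOpen_ball.mem_nhds (hγ0 ▸ hz₀))
      exact eventually_nhdsWithin_of_eventually_nhds hopen
    have hD1 : ∀ᶠ t in 𝓝[>] (0:ℝ), D t < 1 := hDtend.eventually_lt_const one_pos
    filter_upwards [hmem, hD1, self_mem_nhdsWithin] with t htmem htD1 htpos
    have ht : (0:ℝ) < t := htpos
    have hb := hudiff (γ t) htmem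
    have hρ : hypDist z₀ (γ t) ≤ (1/2) * (D t + D t * (1 - D t)⁻¹) := by
      rw [hhyp t]
      exact hypdist_le (hDnonneg t) htD1
    have habs2 : |u (γ t) - u z₀| ≤ 2 * α * ((1/2) * (D t + D t * (1 - D t)⁻¹)) := by
      refine hb.trans ?_
      have h4 := mul_le_mul_of_nonneg_left hρ (by positivity : (0:ℝ) ≤ 2 * α)
      linarith
    rw [abs_div, abs_of_pos ht, div_le_iff₀ ht]
    calc |u (γ t) - u z₀| ≤ 2 * α * ((1/2) * (D t + D t * (1 - D t)⁻¹)) := habs2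
      _ = α * (D t) * (1 + (1 - D t)⁻¹) := by ring
      _ = B t * t := by
          rw [hBdef]
          simp only
          rw [hDt t ht]
          ring
  have hlim : |rlin w v| ≤ α * (1 - Complex.normSq z₀)⁻¹ * 2 :=
    le_of_tendsto_of_tendsto hslope.abs hBtend hev
  have h2w : 2 * ‖w‖ ≤ α * (1 - Complex.normSq z₀)⁻¹ * 2 := by
    have he : |rlin w v| = 2 * ‖w‖ := by
      rw [hLv]; exact abs_of_nonneg (by positivity)
    rw [he] at hlim
    exact hlim
  rw [habsAf]
  have hq := hqpos z₀ hz₀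
  calc (1 - Complex.normSq z₀) * ‖w‖
      ≤ (1 - Complex.normSq z₀) * (α * (1 - Complex.normSq z₀)⁻¹) := by
        apply mul_le_mul_of_nonneg_left ?_ hq.le
        linarith
    _ = α := by field_simp
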